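/- Let μ be a σ-finite measure on a measurable space X, let p₁ and p₂ be strictly positive probability densities with respect to μ, and let σ(w) = 1/(1+e^{−w}) denote the sigmoid function. Define r*(x) = log(p₁(x)/p₂(x)). Then for every measurable function r : X → ℝ, ∫∫ log σ(r(x) − r(y)) p₁(x) p₂(y) dμ(x) dμ(y) ≤ ∫∫ log σ(r*(x) − r*(y)) p₁(x) p₂(y) dμ(x) dμ(y), where both double integrals take values in [−∞, 0]. -/

import Mathlib

open MeasureTheory Real ENNReal

/-- The sigmoid function `σ(w) = 1/(1 + e^{-w})`. -/
noncomputable def sigmoid (w : ℝ) : ℝ := 1 / (1 + Real.exp (-w))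

lemma sigmoid_pos (w : ℝ) : 0 < _root_.sigmoid w := by unfold _root_.sigmoid; positivity

lemma sigmoid_lt_one (w : ℝ) : _root_.sigmoid w < 1 := by
  unfold _root_.sigmoid
  rw [div_lt_one (by positivity)]
  linarith [Real.exp_pos (-w)]

lemma sigmoid_neg (w : ℝ) : _root_.sigmoid (-w) = 1 - _root_.sigmoid w := by
  unfold _root_.sigmoid
  have h1 : (1:ℝ) + Real.exp (-w) ≠ 0 := by positivity
  have h2 : (1:ℝ) + Real.exp w ≠ 0 := by positivity
  have he : Real.exp (-w) = (Real.exp w)⁻¹ := Real.exp_neg w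
  rw [neg_neg]
  field_simp [he]
  have hm : Real.exp (-w) * Real.exp w = 1 := by rw [← Real.exp_add, neg_add_cancel, Real.exp_zero]
  linear_combination -hm

lemma continuous_sigmoid' : Continuous _root_.sigmoid := by
  unfold _root_.sigmoid
  fun_prop (disch := intro x; positivity)

lemma neg_log_sigmoid_nonneg (w : ℝ) : 0 ≤ -Real.log (_root_.sigmoid w) := by
  simpa using Real.log_nonpos (_root_.sigmoid_pos w).le (_root_.sigmoid_lt_one w).le

lemma gibbs {p q s : ℝ} (hp : 0 < p) (hq : 0 < q) (hs : 0 < s) (hs1 : s < 1) :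
    p * (-Real.log (p / (p + q))) + q * (-Real.log (q / (p + q))) ≤
      p * (-Real.log s) + q * (-Real.log (1 - s)) := by
  have hpq : 0 < p + q := by linarith
  have h1s : 0 < 1 - s := by linarith
  have h1 : Real.log (s * (p + q) / p) ≤ s * (p + q) / p - 1 :=
    Real.log_le_sub_one_of_pos (by positivity)
  have h2 : Real.log ((1 - s) * (p + q) / q) ≤ (1 - s) * (p + q) / q - 1 :=
    Real.log_le_sub_one_of_pos (by positivity)
  have e1 : Real.log (s * (p + q) / p) = Real.log s - Real.log (p / (p + q)) := by
    rw [Real.log_div (by positivity) hp.ne', Real.log_mul hs.ne' hpq.ne',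
      Real.log_div hp.ne' hpq.ne']
    ring
  have e2 : Real.log ((1 - s) * (p + q) / q) = Real.log (1 - s) - Real.log (q / (p + q)) := by
    rw [Real.log_div (by positivity) hq.ne', Real.log_mul h1s.ne' hpq.ne',
      Real.log_div hq.ne' hpq.ne']
    ring
  rw [e1] at h1; rw [e2] at h2
  have m1 : p * (Real.log s - Real.log (p / (p + q))) ≤ s * (p + q) - p := by
    have := mul_le_mul_of_nonneg_left h1 hp.le
    have hd : p * (s * (p + q) / p - 1) = s * (p + q) - p := by field_simp
    linarith [this, hd.le]
  have m2 : q * (Real.log (1 - s) - Real.log (q / (p + q))) ≤ (1 - s) * (p + q) - q := by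
    have := mul_le_mul_of_nonneg_left h2 hq.le
    have hd : q * ((1 - s) * (p + q) / q - 1) = (1 - s) * (p + q) - q := by field_simp
    linarith [this, hd.le]
  nlinarith [m1, m2]

lemma sigmoid_log_div {p q : ℝ} (hp : 0 < p) (hq : 0 < q) :
    _root_.sigmoid (Real.log (p / q)) = p / (p + q) := by
  unfold _root_.sigmoid
  rw [Real.exp_neg, Real.exp_log (div_pos hp hq)]
  have hpq : (0:ℝ) < p + q := by linarith
  field_simp

lemma key {p q : ℝ} (hp : 0 < p) (hq : 0 < q) (a : ℝ) :
    p * (-Real.log (_root_.sigmoid (Real.log (p / q)))) +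
      q * (-Real.log (_root_.sigmoid (-(Real.log (p / q))))) ≤
    p * (-Real.log (_root_.sigmoid a)) + q * (-Real.log (_root_.sigmoid (-a))) := by
  have h1 : _root_.sigmoid (Real.log (p / q)) = p / (p + q) := sigmoid_log_div hp hq
  have h2 : _root_.sigmoid (-(Real.log (p / q))) = q / (p + q) := by
    rw [_root_.sigmoid_neg, h1]
    have hpq : (0:ℝ) < p + q := by linarith
    field_simp
    ring
  rw [h1, h2, _root_.sigmoid_neg a]
  exact gibbs hp hq (_root_.sigmoid_pos a) (_root_.sigmoid_lt_one a)

theorem bt_reward_optimal {X : Type*} [MeasurableSpace X] (μ : Measure X) [SigmaFinite μ]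
    (p₁ p₂ : X → ℝ) (hp₁m : Measurable p₁) (hp₂m : Measurable p₂)
    (hp₁pos : ∀ x, 0 < p₁ x) (hp₂pos : ∀ x, 0 < p₂ x)
    (hp₁i : Integrable p₁ μ) (hp₂i : Integrable p₂ μ)
    (hp₁1 : ∫ x, p₁ x ∂μ = 1) (hp₂1 : ∫ x, p₂ x ∂μ = 1)
    (rstar : X → ℝ) (hrstar : ∀ x, rstar x = Real.log (p₁ x / p₂ x))
    (r : X → ℝ) (hrm : Measurable r) :
    ∫⁻ x, ∫⁻ y,
        ENNReal.ofReal (p₁ x * p₂ y * (-(Real.log (_root_.sigmoid (rstar x - rstar y))))) ∂μ ∂μ ≤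
      ∫⁻ x, ∫⁻ y,
        ENNReal.ofReal (p₁ x * p₂ y * (-(Real.log (_root_.sigmoid (r x - r y))))) ∂μ ∂μ := by
  have hrsm : Measurable rstar := by
    have : rstar = fun x => Real.log (p₁ x / p₂ x) := funext hrstar
    rw [this]
    exact (hp₁m.div hp₂m).log
  -- uncurried integrands on the product space
  set F : X × X → ℝ≥0∞ := fun z =>
    ENNReal.ofReal (p₁ z.1 * p₂ z.2 * (-(Real.log (_root_.sigmoid (rstar z.1 - rstar z.2))))) with hF
  set G : X × X → ℝ≥0∞ := fun z =>
    ENNReal.ofReal (p₁ z.1 * p₂ z.2 * (-(Real.log (_root_.sigmoid (r z.1 - r z.2))))) with hG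
  have hmul : ∀ (f : X → ℝ), Measurable f → Measurable fun z : X × X =>
      ENNReal.ofReal (p₁ z.1 * p₂ z.2 * (-(Real.log (_root_.sigmoid (f z.1 - f z.2))))) := by
    intro f hf
    apply ENNReal.measurable_ofReal.comp
    exact ((hp₁m.comp measurable_fst).mul (hp₂m.comp measurable_snd)).mul
      ((Real.measurable_log.comp (continuous_sigmoid'.measurable.comp
        ((hf.comp measurable_fst).sub (hf.comp measurable_snd)))).neg)
  have hFm : Measurable F := hmul rstar hrsm
  have hGm : Measurable G := hmul r hrm
  -- pointwise symmetrized inequality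
  have hpt : ∀ z : X × X, F z + F (Prod.swap z) ≤ G z + G (Prod.swap z) := by
    rintro ⟨x, y⟩
    have hp : (0:ℝ) < p₁ x * p₂ y := mul_pos (hp₁pos x) (hp₂pos y)
    have hq : (0:ℝ) < p₁ y * p₂ x := mul_pos (hp₁pos y) (hp₂pos x)
    have nonneg : ∀ (u v w : ℝ), 0 < u → 0 < v → 0 ≤ u * v * (-(Real.log (_root_.sigmoid w))) := by
      intro u v w hu hv
      exact mul_nonneg (mul_pos hu hv).le (neg_log_sigmoid_nonneg w)
    simp only [hF, hG, Prod.swap, Prod.fst, Prod.snd]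
    rw [← ENNReal.ofReal_add (nonneg _ _ _ (hp₁pos x) (hp₂pos y))
        (nonneg _ _ _ (hp₁pos y) (hp₂pos x)),
      ← ENNReal.ofReal_add (nonneg _ _ _ (hp₁pos x) (hp₂pos y))
        (nonneg _ _ _ (hp₁pos y) (hp₂pos x))]
    apply ENNReal.ofReal_le_ofReal
    have hargs : rstar x - rstar y = Real.log ((p₁ x * p₂ y) / (p₁ y * p₂ x)) := by
      have h1 := hp₁pos x; have h2 := hp₂pos x; have h3 := hp₁pos y; have h4 := hp₂pos y
      rw [hrstar x, hrstar y,
        ← Real.log_div (div_pos h1 h2).ne' (div_pos h3 h4).ne']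
      congr 1
      field_simp
    have hargs' : rstar y - rstar x = -(Real.log ((p₁ x * p₂ y) / (p₁ y * p₂ x))) := by
      rw [← hargs]; ring_nf
    have hr' : r y - r x = -(r x - r y) := by ring
    rw [hargs, hargs', hr']
    have := key hp hq (r x - r y)
    -- rearrange multiplication orders
    calc p₁ x * p₂ y * -Real.log (_root_.sigmoid (Real.log (p₁ x * p₂ y / (p₁ y * p₂ x)))) +
          p₁ y * p₂ x * -Real.log (_root_.sigmoid (-Real.log (p₁ x * p₂ y / (p₁ y * p₂ x))))
        ≤ p₁ x * p₂ y * -Real.log (_root_.sigmoid (r x - r y)) +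
          p₁ y * p₂ x * -Real.log (_root_.sigmoid (-(r x - r y))) := this
      _ = p₁ x * p₂ y * -Real.log (_root_.sigmoid (r x - r y)) +
          p₁ y * p₂ x * -Real.log (_root_.sigmoid (-(r x - r y))) := rfl
  -- pass to the product measure
  have hiterF : ∫⁻ x, ∫⁻ y, F (x, y) ∂μ ∂μ = ∫⁻ z, F z ∂(μ.prod μ) :=
    (lintegral_prod F hFm.aemeasurable).symm
  have hiterG : ∫⁻ x, ∫⁻ y, G (x, y) ∂μ ∂μ = ∫⁻ z, G z ∂(μ.prod μ) :=
    (lintegral_prod G hGm.aemeasurable).symm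
  have hswapF : ∫⁻ z, F (Prod.swap z) ∂(μ.prod μ) = ∫⁻ z, F z ∂(μ.prod μ) :=
    lintegral_prod_swap F
  have hswapG : ∫⁻ z, G (Prod.swap z) ∂(μ.prod μ) = ∫⁻ z, G z ∂(μ.prod μ) :=
    lintegral_prod_swap G
  have h2 : 2 * ∫⁻ z, F z ∂(μ.prod μ) ≤ 2 * ∫⁻ z, G z ∂(μ.prod μ) := by
    have eF : 2 * ∫⁻ z, F z ∂(μ.prod μ) = ∫⁻ z, (F z + F (Prod.swap z)) ∂(μ.prod μ) := by
      rw [lintegral_add_left hFm, hswapF, two_mul]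
    have eG : 2 * ∫⁻ z, G z ∂(μ.prod μ) = ∫⁻ z, (G z + G (Prod.swap z)) ∂(μ.prod μ) := by
      rw [lintegral_add_left hGm, hswapG, two_mul]
    rw [eF, eG]
    exact lintegral_mono hpt
  have := (ENNReal.mul_le_mul_iff_right (a := 2) (by norm_num) (by norm_num)).mp h2
  calc ∫⁻ x, ∫⁻ y,
        ENNReal.ofReal (p₁ x * p₂ y * (-(Real.log (_root_.sigmoid (rstar x - rstar y))))) ∂μ ∂μ
      = ∫⁻ z, F z ∂(μ.prod μ) := hiterF
    _ ≤ ∫⁻ z, G z ∂(μ.prod μ) := this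
    _ = ∫⁻ x, ∫⁻ y,
        ENNReal.ofReal (p₁ x * p₂ y * (-(Real.log (_root_.sigmoid (r x - r y))))) ∂μ ∂μ := hiterG.symm
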